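/- Let m and n be positive integers, let a_1,…,a_m, b_1,…,b_m ∈ ℂ be such that for every i and every nonnegative integer k one has n·b_i + k ≠ 0, let ξ_n ∈ ℂ be a primitive n-th root of unity, and let z ∈ ℂ with |z| < 1. Then Σ_{l=0}^{n−1} _mF_m[n a_1, …, n a_m; n b_1, …, n b_m | ξ_n^l · z] = n · _{nm}F_{nm}[ (a_i + l/n : 1 ≤ i ≤ m, 0 ≤ l ≤ n−1) ; (b_i + l/n : 1 ≤ i ≤ m, 0 ≤ l ≤ n−1) | z^n ], where the right-hand side is the series of order nm whose upper parameters are the nm numbers a_i + l/n and whose lower parameters are the nm numbers b_i + l/n; all series involved converge absolutely for |z| < 1. -/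

import Mathlib

open Finset Filter Topology Polynomial

/-- The `k`-th coefficient of the classical generalized hypergeometric series with upper
parameters `a` and lower parameters `b` (indexed by a finite type `ι`):
`(∏ᵢ (aᵢ)ₖ) / (∏ᵢ (bᵢ)ₖ)` where `(x)ₖ` is the Pochhammer (rising factorial) symbol. -/
noncomputable def hypCoeff {ι : Type} [Fintype ι] (a b : ι → ℂ) (k : ℕ) : ℂ :=
  (∏ i, (ascPochhammer ℂ k).eval (a i)) / (∏ i, (ascPochhammer ℂ k).eval (b i))

/-- The classical generalized hypergeometric series `ₘFₘ[a ; b | z]`. -/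
noncomputable def cHyp {ι : Type} [Fintype ι] (a b : ι → ℂ) (z : ℂ) : ℂ :=
  ∑' k : ℕ, hypCoeff a b k * z ^ k

lemma asc_eval_prod (k : ℕ) (x : ℂ) :
    (ascPochhammer ℂ k).eval x = ∏ j ∈ Finset.range k, (x + j) := by
  induction k with
  | zero => simp
  | succ k ih => rw [ascPochhammer_succ_eval, ih, Finset.prod_range_succ]

lemma asc_eval_add (k l : ℕ) (x : ℂ) :
    (ascPochhammer ℂ (k + l)).eval x
      = (ascPochhammer ℂ k).eval x * (ascPochhammer ℂ l).eval (x + k) := by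
  rw [← ascPochhammer_mul, Polynomial.eval_mul, Polynomial.eval_comp]
  simp

lemma gauss_mult (n : ℕ) (hn : (n : ℂ) ≠ 0) (x : ℂ) (j : ℕ) :
    (ascPochhammer ℂ (n * j)).eval ((n : ℂ) * x)
      = (n : ℂ) ^ (n * j) * ∏ l ∈ Finset.range n, (ascPochhammer ℂ j).eval (x + l / n) := by
  induction j with
  | zero => simp
  | succ j ih =>
    have h1 : n * (j + 1) = n * j + n := by ring
    rw [h1, asc_eval_add, ih, asc_eval_prod]
    have h2 : ∀ t ∈ Finset.range n, ((n : ℂ) * x + (↑(n * j) : ℂ) + t)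
        = (n : ℂ) * (x + j + t / n) := by
      intro t _
      push_cast
      field_simp
    rw [Finset.prod_congr rfl h2]
    have h3 : ∏ t ∈ Finset.range n, ((n : ℂ) * (x + j + t / n))
        = (n : ℂ) ^ n * ∏ t ∈ Finset.range n, (x + j + t / n) := by
      rw [Finset.prod_mul_distrib, Finset.prod_const, Finset.card_range]
    rw [h3]
    have h4 : ∀ l ∈ Finset.range n, (ascPochhammer ℂ (j + 1)).eval (x + l / n)
        = (ascPochhammer ℂ j).eval (x + l / n) * (x + j + l / n) := by
      intro l _
      rw [ascPochhammer_succ_eval]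
      ring_nf
    rw [Finset.prod_congr rfl h4, Finset.prod_mul_distrib]
    rw [pow_add]
    ring

lemma hypCoeff_succ {ι : Type} [Fintype ι] (a b : ι → ℂ) (k : ℕ) :
    hypCoeff a b (k + 1)
      = hypCoeff a b k * (∏ i, (a i + k)) / (∏ i, (b i + k)) := by
  unfold hypCoeff
  simp only [ascPochhammer_succ_eval, Finset.prod_mul_distrib]
  rw [div_mul_eq_mul_div, div_div]

lemma ratio_tendsto (α β : ℂ) (hβ : ∀ k : ℕ, β + k ≠ 0) :
    Tendsto (fun k : ℕ => (α + k) / (β + k)) atTop (𝓝 1) := by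
  have h0 : Tendsto (fun k : ℕ => (β + (k : ℂ))⁻¹) atTop (𝓝 0) := by
    rw [tendsto_zero_iff_norm_tendsto_zero]
    have hlb : ∀ k : ℕ, (k : ℝ) - ‖β‖ ≤ ‖β + (k : ℂ)‖ := by
      intro k
      have h2 : ‖(k : ℂ)‖ ≤ ‖β + (k : ℂ)‖ + ‖β‖ := by
        calc ‖(k : ℂ)‖ = ‖(β + (k : ℂ)) - β‖ := by ring_nf
          _ ≤ ‖β + (k : ℂ)‖ + ‖β‖ := norm_sub_le _ _
      have h3 : ‖(k : ℂ)‖ = (k : ℝ) := by simp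
      linarith
    have hT : Tendsto (fun k : ℕ => ‖β + (k : ℂ)‖) atTop atTop :=
      tendsto_atTop_mono hlb
        ((tendsto_natCast_atTop_atTop).atTop_add tendsto_const_nhds)
    simp only [norm_inv]; exact hT.inv_tendsto_atTop
  have heq : ∀ k : ℕ, (α + k) / (β + k) = 1 + (α - β) * (β + (k : ℂ))⁻¹ := by
    intro k
    field_simp [hβ k]
    ring
  simp only [heq]
  have := (tendsto_const_nhds (x := (α - β)) (f := atTop (α := ℕ))).mul h0
  simpa using (tendsto_const_nhds (x := (1 : ℂ)) (f := atTop (α := ℕ))).add this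

lemma summable_hyp {ι : Type} [Fintype ι] (a b : ι → ℂ)
    (hb : ∀ i, ∀ k : ℕ, b i + k ≠ 0) (w : ℂ) (hw : ‖w‖ < 1) :
    Summable (fun k : ℕ => hypCoeff a b k * w ^ k) := by
  set f : ℕ → ℂ := fun k => hypCoeff a b k * w ^ k with hf
  have hB : ∀ k : ℕ, (∏ i, (b i + (k : ℂ))) ≠ 0 := fun k =>
    Finset.prod_ne_zero_iff.mpr fun i _ => hb i k
  by_cases hzero : ∀ k, f k ≠ 0
  · have hw0 : w ≠ 0 := by
      intro h
      exact hzero 1 (by simp [hf, h])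
    have hc : ∀ k, hypCoeff a b k ≠ 0 := by
      intro k h
      exact hzero k (by simp [hf, h])
    have key : ∀ k : ℕ, ‖f (k + 1)‖ / ‖f k‖
        = ‖w * ∏ i, ((a i + (k : ℂ)) / (b i + (k : ℂ)))‖ := by
      intro k
      rw [← norm_div]
      congr 1
      rw [hf]
      simp only [hypCoeff_succ, Finset.prod_div_distrib]
      field_simp [hc k, hB k, hw0]
      ring
    have hT : Tendsto (fun k : ℕ => w * ∏ i, ((a i + (k : ℂ)) / (b i + (k : ℂ))))
        atTop (𝓝 (w * ∏ _i : ι, (1 : ℂ))) := by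
      refine Tendsto.mul tendsto_const_nhds ?_
      exact tendsto_finset_prod _ fun i _ => ratio_tendsto (a i) (b i) (hb i)
    have hT2 : Tendsto (fun k : ℕ => ‖f (k + 1)‖ / ‖f k‖) atTop (𝓝 ‖w‖) := by
      have := hT.norm
      simp only [Finset.prod_const_one, mul_one] at this
      simpa only [key] using this
    refine summable_of_ratio_test_tendsto_lt_one ?_ (Eventually.of_forall hzero) hT2
    exact hw
  · push_neg at hzero
    obtain ⟨k0, hk0⟩ := hzero
    have hstep : ∀ k, f k = 0 → f (k + 1) = 0 := by
      intro k h
      rcases mul_eq_zero.mp h with h | h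
      · simp [hf, hypCoeff_succ, h]
      · have : w = 0 := (pow_eq_zero_iff'.mp h).1
        simp [hf, this]
    have hall : ∀ k, k0 ≤ k → f k = 0 := by
      intro k hk
      induction k, hk using Nat.le_induction with
      | base => exact hk0
      | succ k hk ih => exact hstep k ih
    refine summable_of_ne_finset_zero (s := Finset.range (k0 + 1)) ?_
    intro k hk
    simp only [Finset.mem_range, not_lt] at hk
    exact hall k (by omega)

theorem stmt8 (m n : ℕ) (hm : 0 < m) (hn : 0 < n)
    (a b : Fin m → ℂ) (hb : ∀ i, ∀ k : ℕ, (n : ℂ) * b i + k ≠ 0)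
    (ξ : ℂ) (hξ : IsPrimitiveRoot ξ n) (z : ℂ) (hz : ‖z‖ < 1) :
    (∀ l ∈ Finset.range n,
        Summable (fun k : ℕ =>
          hypCoeff (fun i => (n : ℂ) * a i) (fun i => (n : ℂ) * b i) k * (ξ ^ l * z) ^ k)) ∧
    Summable (fun k : ℕ =>
        hypCoeff (fun p : Fin m × Fin n => a p.1 + (p.2 : ℕ) / n)
          (fun p : Fin m × Fin n => b p.1 + (p.2 : ℕ) / n) k * (z ^ n) ^ k) ∧
    ∑ l ∈ Finset.range n,
        cHyp (fun i => (n : ℂ) * a i) (fun i => (n : ℂ) * b i) (ξ ^ l * z)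
      = n * cHyp (fun p : Fin m × Fin n => a p.1 + (p.2 : ℕ) / n)
          (fun p : Fin m × Fin n => b p.1 + (p.2 : ℕ) / n) (z ^ n) := by
  have hnC : (n : ℂ) ≠ 0 := Nat.cast_ne_zero.mpr hn.ne'
  set c : ℕ → ℂ := hypCoeff (fun i => (n : ℂ) * a i) (fun i => (n : ℂ) * b i) with hc
  -- |ξ^l z| = |z| < 1
  have hξabs : ‖ξ‖ = 1 := hξ.norm'_eq_one hn.ne'
  have habs : ∀ l : ℕ, ‖ξ ^ l * z‖ < 1 := by
    intro l
    rwa [norm_mul, norm_pow, hξabs, one_pow, one_mul]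
  -- part 1
  have hs : ∀ l : ℕ, Summable (fun k : ℕ => c k * (ξ ^ l * z) ^ k) := fun l =>
    summable_hyp _ _ hb _ (habs l)
  have hs0 : Summable (fun k : ℕ => c k * z ^ k) := summable_hyp _ _ hb z hz
  -- the coefficient identity
  have hprod : ∀ j : ℕ,
      hypCoeff (fun p : Fin m × Fin n => a p.1 + (p.2 : ℕ) / n)
        (fun p : Fin m × Fin n => b p.1 + (p.2 : ℕ) / n) j = c (n * j) := by
    intro j
    rw [hc]
    unfold hypCoeff
    have hnum : ∀ x : Fin m → ℂ,
        (∏ i, (ascPochhammer ℂ (n * j)).eval ((n : ℂ) * x i))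
          = ((n : ℂ) ^ (n * j)) ^ m *
            ∏ p : Fin m × Fin n, (ascPochhammer ℂ j).eval (x p.1 + (p.2 : ℕ) / n) := by
      intro x
      have h1 : ∀ i : Fin m, (ascPochhammer ℂ (n * j)).eval ((n : ℂ) * x i)
          = (n : ℂ) ^ (n * j) *
            ∏ l ∈ Finset.range n, (ascPochhammer ℂ j).eval (x i + l / n) :=
        fun i => gauss_mult n hnC (x i) j
      rw [Finset.prod_congr rfl fun i _ => h1 i, Finset.prod_mul_distrib,
        Finset.prod_const, Finset.card_univ, Fintype.card_fin,
        Fintype.prod_prod_type]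
      congr 1
      refine Finset.prod_congr rfl fun i _ => ?_
      exact (Fin.prod_univ_eq_prod_range (fun l => (ascPochhammer ℂ j).eval (x i + l / n)) n).symm
    rw [hnum a, hnum b, mul_div_mul_left]
    exact pow_ne_zero _ (pow_ne_zero _ hnC)
  -- roots of unity sum
  have hroot : ∀ k : ℕ, (∑ l ∈ Finset.range n, (ξ ^ k) ^ l)
      = if n ∣ k then (n : ℂ) else 0 := by
    intro k
    by_cases hd : n ∣ k
    · rw [if_pos hd]
      have : ξ ^ k = 1 := (hξ.pow_eq_one_iff_dvd k).mpr hd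
      simp [this]
    · rw [if_neg hd]
      have hne : ξ ^ k ≠ 1 := fun h => hd ((hξ.pow_eq_one_iff_dvd k).mp h)
      rw [geom_sum_eq hne]
      have : (ξ ^ k) ^ n = 1 := by
        rw [← pow_mul, mul_comm, pow_mul, hξ.pow_eq_one, one_pow]
      simp [this]
  refine ⟨fun l _ => hs l, ?_, ?_⟩
  · -- part 2 : summability of RHS series
    have hinj : Function.Injective (fun j : ℕ => n * j) :=
      fun x y h => by simpa [Nat.mul_left_cancel_iff hn] using h
    have := hs0.comp_injective hinj
    refine this.congr fun j => ?_
    simp only [Function.comp_apply, hprod j, pow_mul]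
  · -- the identity
    set F : ℕ → ℂ := fun k => if n ∣ k then (n : ℂ) * (c k * z ^ k) else 0 with hF
    have hLHS : ∑ l ∈ Finset.range n,
        cHyp (fun i => (n : ℂ) * a i) (fun i => (n : ℂ) * b i) (ξ ^ l * z)
        = ∑' k : ℕ, F k := by
      unfold cHyp
      rw [← hc, ← Summable.tsum_finsetSum fun l _ => hs l]
      refine tsum_congr fun k => ?_
      have hterm : ∀ l ∈ Finset.range n, c k * (ξ ^ l * z) ^ k
          = (ξ ^ k) ^ l * (c k * z ^ k) := by
        intro l _
        rw [mul_pow, ← pow_mul, mul_comm l k, pow_mul]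
        ring
      rw [Finset.sum_congr rfl hterm, ← Finset.sum_mul, hroot k, hF]
      by_cases hd : n ∣ k <;> simp [hd]
    have hRHS : (n : ℂ) * cHyp (fun p : Fin m × Fin n => a p.1 + (p.2 : ℕ) / n)
          (fun p : Fin m × Fin n => b p.1 + (p.2 : ℕ) / n) (z ^ n)
        = ∑' k : ℕ, F k := by
      unfold cHyp
      rw [← tsum_mul_left]
      have hinj : Function.Injective (fun j : ℕ => n * j) :=
        fun x y h => by simpa [Nat.mul_left_cancel_iff hn] using h
      have hsupp : Function.support F ⊆ Set.range (fun j : ℕ => n * j) := by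
        intro k hk
        rw [Function.mem_support, hF] at hk
        by_cases hd : n ∣ k
        · obtain ⟨j, rfl⟩ := hd
          exact ⟨j, rfl⟩
        · simp [hd] at hk
      rw [← hinj.tsum_eq hsupp]
      refine tsum_congr fun j => ?_
      have hd : n ∣ n * j := ⟨j, rfl⟩
      simp only [hF, if_pos hd, hprod j, pow_mul]
    rw [hLHS, hRHS]
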